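/- arXiv:2111.13059 — 4 statements merged into one kernel-verified Lean document; each statement's English description precedes it below -/
import Mathlib

section
/- For all finite multiindices α, β one has s_α* s_β = q(α,β) s_{β∖α} s*_{α∖β}, where q(α,β) ∈ ℂ is the scalar defined by the recursion q(∅,β) = 1 and q(α,β) = q(α_1,β) · q(σ(α), β∖α_1). -/
open scoped BigOperators InnerProductSpace

namespace QCstar

variable {d : ℕ}

/-- `q(j,α)`: product of `q j a` over the prefix of `α` preceding the first
occurrence of `j` (the whole list if `j` does not occur in `α`). -/
def qOne (q : Fin d → Fin d → ℂ) (j : Fin d) (α : List (Fin d)) : ℂ :=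
  ((α.takeWhile fun a => a ≠ j).map (q j)).prod

/-- `q(α,β)` for finite multiindices, defined by recursion on `α`. -/
def qMul (q : Fin d → Fin d → ℂ) : List (Fin d) → List (Fin d) → ℂ
  | [], _ => 1
  | a :: α, β => qOne q a β * qMul q α (β.erase a)

/-- `s_α = s_{α₁} ⋯ s_{α_m}`. -/
def sWord {A : Type*} [Monoid A] (s : Fin d → A) (α : List (Fin d)) : A :=
  (α.map s).prod

/-- The shift on infinite multiindices. -/
def shift (β : ℕ → Fin d) : ℕ → Fin d := fun n => β (n + 1)

/-- The finite multiindex `(β₁,…,β_m)`. -/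
def prefixList (β : ℕ → Fin d) (m : ℕ) : List (Fin d) :=
  List.ofFn fun i : Fin m => β i

/-- `β ∼ α`: the tails agree up to a shift. -/
def equivTail (β α : ℕ → Fin d) : Prop := ∃ m n, shift^[m] β = shift^[n] α

/-- `q(α,β)` for infinite multiindices: the limit of `q` of the prefixes. -/
noncomputable def qInf (q : Fin d → Fin d → ℂ) (α β : ℕ → Fin d) : ℂ :=
  Filter.limUnder Filter.atTop fun m => qMul q (prefixList α m) (prefixList β m)

/-- `(j, β₁, β₂, …)`. -/
def consSeq (j : Fin d) (β : ℕ → Fin d) : ℕ → Fin d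
  | 0 => j
  | n + 1 => β n

open Classical in
/-- `β ∖ j` for an infinite multiindex: remove the first occurrence of `j`. -/
noncomputable def eraseInf (j : Fin d) (β : ℕ → Fin d) : ℕ → Fin d :=
  if h : ∃ n, β n = j then fun k => if k < Nat.find h then β k else β (k + 1) else β

open Classical in
/-- `q(j,β)` for an infinite multiindex containing `j`. -/
noncomputable def qOneInf (q : Fin d → Fin d → ℂ) (j : Fin d) (β : ℕ → Fin d) : ℂ :=
  if h : ∃ n, β n = j then ∏ k ∈ Finset.range (Nat.find h), q j (β k) else 0

/-- Entries of the Fock form. -/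
noncomputable def fockEntry (q : Fin d → Fin d → ℂ) (α β : List (Fin d)) : ℂ :=
  if β.Perm α then qMul q β α else 0

/-- The Fock sesquilinear form on the free complex vector space with basis the
finite multiindices (conjugate-linear in the first argument). -/
noncomputable def fockForm (q : Fin d → Fin d → ℂ) (x y : List (Fin d) →₀ ℂ) : ℂ :=
  ∑ α ∈ x.support, ∑ β ∈ y.support, (starRingEnd ℂ) (x α) * y β * fockEntry q α β

lemma sWord_cons {A : Type*} [Monoid A] (s : Fin d → A) (a : Fin d) (α : List (Fin d)) :
    sWord s (a :: α) = s a * sWord s α := by simp [sWord]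

lemma starOne {A : Type*} [NormedRing A] [StarRing A]
    [NormedAlgebra ℂ A] [StarModule ℂ A]
    (q : Fin d → Fin d → ℂ)
    (s : Fin d → A) (hiso : ∀ i, star (s i) * s i = 1)
    (hrel : ∀ i j : Fin d, i ≠ j → star (s i) * s j = q i j • (s j * star (s i)))
    (j : Fin d) (β : List (Fin d)) :
    star (s j) * sWord s β
      = qOne q j β • (sWord s (β.erase j) * (if j ∈ β then 1 else star (s j))) := by
  induction β with
  | nil => simp [sWord, qOne]
  | cons b β ih =>
    by_cases hb : b = j
    · subst hb
      simp only [sWord_cons, List.erase_cons_head, List.mem_cons, true_or, if_true]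
      rw [← mul_assoc, hiso, one_mul, mul_one]
      simp [qOne, List.takeWhile]
    · have hbj : j ≠ b := fun h => hb h.symm
      rw [sWord_cons, ← mul_assoc, hrel j b hbj, smul_mul_assoc, mul_assoc, ih]
      rw [List.erase_cons_tail (by simp [hb]), sWord_cons]
      have hq : qOne q j (b :: β) = q j b * qOne q j β := by
        simp [qOne, List.takeWhile, hb]
      by_cases hjβ : j ∈ β
      · rw [if_pos hjβ, if_pos (List.mem_cons_of_mem b hjβ)]
        simp only [hq, mul_one, mul_smul, mul_smul_comm]
      · rw [if_neg hjβ, if_neg (by simp [hbj, hjβ])]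
        simp only [hq, mul_smul, mul_smul_comm, mul_assoc]

theorem statement2' {d : ℕ} (q : Fin d → Fin d → ℂ)
    {A : Type*} [NormedRing A] [StarRing A]
    [NormedAlgebra ℂ A] [StarModule ℂ A]
    (s : Fin d → A) (hiso : ∀ i, star (s i) * s i = 1)
    (hrel : ∀ i j : Fin d, i ≠ j → star (s i) * s j = q i j • (s j * star (s i)))
    (α β : List (Fin d)) :
    star (sWord s α) * sWord s β
      = qMul q α β • (sWord s (β.diff α) * star (sWord s (α.diff β))) := by
  induction α generalizing β with
  | nil => simp [sWord, qMul]
  | cons a α ih =>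
    rw [sWord_cons, star_mul, mul_assoc, starOne q s hiso hrel]
    by_cases ha : a ∈ β
    · rw [if_pos ha, mul_one]
      rw [mul_smul_comm, ih (β.erase a)]
      rw [List.diff_cons, List.cons_diff_of_mem ha]
      conv_rhs => rw [qMul]
      rw [mul_smul]
    · rw [if_neg ha, List.erase_of_not_mem ha]
      rw [mul_smul_comm, ← mul_assoc, ih β, smul_mul_assoc]
      conv_rhs => rw [qMul]
      rw [List.erase_of_not_mem ha, mul_smul, List.diff_cons,
        List.erase_of_not_mem ha, List.cons_diff_of_not_mem ha, sWord_cons, star_mul,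
        mul_assoc]

theorem statement2 {d : ℕ} (hd : 2 ≤ d) (q : Fin d → Fin d → ℂ)
    (hsym : ∀ i j : Fin d, i ≠ j → q i j = (starRingEnd ℂ) (q j i))
    (hlt : ∀ i j : Fin d, i ≠ j → ‖q i j‖ < 1)
    {A : Type*} [NormedRing A] [StarRing A] [CStarRing A] [CompleteSpace A]
    [NormedAlgebra ℂ A] [StarModule ℂ A]
    (s : Fin d → A) (hiso : ∀ i, star (s i) * s i = 1)
    (hrel : ∀ i j : Fin d, i ≠ j → star (s i) * s j = q i j • (s j * star (s i)))
    (α β : List (Fin d)) :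
    star (sWord s α) * sWord s β
      = qMul q α β • (sWord s (β.diff α) * star (sWord s (α.diff β))) :=
  statement2' q s hiso hrel α β

end QCstar
end

section
/- For all infinite multiindices α, β ∈ Λ, the limit q(α,β) = lim_{m→∞} q((α_1,…,α_m),(β_1,…,β_m)) exists. Moreover q(α,β) ≠ 0 only if there exists m such that σ^m(α) = σ^m(β) and (β_1,…,β_m) is a permutation of (α_1,…,α_m), in which case the sequence q((α_1,…,α_m),(β_1,…,β_m)) is eventually constant. -/
open scoped BigOperators InnerProductSpace

namespace QCstar

variable {d : ℕ}

def Fc : List (Fin d) → List (Fin d) → ℕ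
  | [], _ => 0
  | a :: γ, δ => (δ.takeWhile fun b => b ≠ a).length + Fc γ (δ.erase a)

def Lo : List (Fin d) → List (Fin d) → List (Fin d)
  | [], δ => δ
  | _a :: γ, δ => Lo γ (δ.erase _a)

def Uf : List (Fin d) → List (Fin d) → List (Fin d)
  | [], _ => []
  | a :: γ, δ => (if a ∈ δ then ([] : List (Fin d)) else [a]) ++ Uf γ (δ.erase a)

lemma tw_cons_ne {a c : Fin d} (hc : c ≠ a) (δ : List (Fin d)) :
    ((c :: δ).takeWhile fun b => b ≠ a) = c :: (δ.takeWhile fun b => b ≠ a) :=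
  List.takeWhile_cons_of_pos (by simpa using hc)

lemma tw_cons_eq {a : Fin d} (δ : List (Fin d)) :
    ((a :: δ).takeWhile fun b => b ≠ a) = [] :=
  List.takeWhile_cons_of_neg (by simp)

lemma tw_of_not_mem {a : Fin d} : ∀ {δ : List (Fin d)}, a ∉ δ →
    (δ.takeWhile fun b => b ≠ a) = δ
  | [], _ => rfl
  | c :: δ, h => by
    have hc : c ≠ a := fun e => h (e ▸ (List.mem_cons_self (a := c) (l := δ)))
    rw [tw_cons_ne hc, tw_of_not_mem (fun hm => h (List.mem_cons_of_mem _ hm))]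

lemma tw_append_of_mem {a : Fin d} {ρ : List (Fin d)} : ∀ {δ : List (Fin d)}, a ∈ δ →
    ((δ ++ ρ).takeWhile fun b => b ≠ a) = δ.takeWhile fun b => b ≠ a
  | [], h => absurd h List.not_mem_nil
  | c :: δ, h => by
    by_cases hc : c = a
    · subst hc; rw [List.cons_append, tw_cons_eq, tw_cons_eq]
    · have : a ∈ δ := by cases h with
        | head => exact absurd rfl hc
        | tail _ hm => exact hm
      rw [List.cons_append, tw_cons_ne hc, tw_cons_ne hc, tw_append_of_mem this]

lemma tw_append_self {a : Fin d} {δ : List (Fin d)} (h : a ∉ δ) :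
    ((δ ++ [a]).takeWhile fun b => b ≠ a) = δ := by
  induction δ with
  | nil => simp [tw_cons_eq]
  | cons c δ ih =>
    have hc : c ≠ a := fun e => h (e ▸ (List.mem_cons_self (a := c) (l := δ)))
    rw [List.cons_append, tw_cons_ne hc, ih (fun hm => h (List.mem_cons_of_mem _ hm))]

/-- appending x to the first list -/
lemma Fc_append : ∀ (γ : List (Fin d)) (δ x),
    Fc (γ ++ [x]) δ = Fc γ δ + ((Lo γ δ).takeWhile fun b => b ≠ x).length
  | [], δ, x => by simp [Fc, Lo]
  | a :: γ, δ, x => by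
    show (δ.takeWhile fun b => b ≠ a).length + Fc (γ ++ [x]) (δ.erase a)
      = (δ.takeWhile fun b => b ≠ a).length + Fc γ (δ.erase a) + _
    rw [Fc_append γ (δ.erase a) x]
    show _ = _ + ((Lo γ (δ.erase a)).takeWhile fun b => b ≠ x).length
    ring

lemma Lo_append : ∀ (γ : List (Fin d)) (δ x),
    Lo (γ ++ [x]) δ = (Lo γ δ).erase x
  | [], δ, x => by simp [Lo]
  | a :: γ, δ, x => by
    show Lo (γ ++ [x]) (δ.erase a) = (Lo γ (δ.erase a)).erase x
    exact Lo_append γ (δ.erase a) x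

/-- ML1a : all heads found -/
lemma Fc_snoc_of_uf_nil : ∀ (γ : List (Fin d)) (δ y), Uf γ δ = [] →
    Fc γ (δ ++ [y]) = Fc γ δ ∧ Lo γ (δ ++ [y]) = Lo γ δ ++ [y]
  | [], δ, y, _ => ⟨rfl, rfl⟩
  | a :: γ, δ, y, h => by
    have ha : a ∈ δ := by
      by_contra hm
      simp [Uf, hm] at h
    have h' : Uf γ (δ.erase a) = [] := by
      simpa [Uf, ha] using h
    have e := List.erase_append_left [y] ha
    obtain ⟨h1, h2⟩ := Fc_snoc_of_uf_nil γ (δ.erase a) y h'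
    constructor
    · simp only [Fc, tw_append_of_mem ha, e, h1]
    · simp only [Lo, e, h2]

/-- ML2a : y equals the first unfound head -/
lemma Fc_snoc_of_uf_head : ∀ (γ : List (Fin d)) (δ a U), Uf γ δ = a :: U →
    Fc γ (δ ++ [a]) = Fc γ δ ∧ Lo γ (δ ++ [a]) = Lo γ δ
  | [], δ, a, U, h => by simp [Uf] at h
  | b :: γ, δ, a, U, h => by
    by_cases hb : b ∈ δ
    · have h' : Uf γ (δ.erase b) = a :: U := by simpa [Uf, hb] using h
      have hbd : b ∈ δ ++ [a] := List.mem_append_left _ hb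
      obtain ⟨h1, h2⟩ := Fc_snoc_of_uf_head γ (δ.erase b) a U h'
      have e := List.erase_append_left [a] hb
      exact ⟨by simp only [Fc, tw_append_of_mem hb, e, h1],
             by simp only [Lo, e, h2]⟩
    · have hab : a = b := by
        have := h
        simp [Uf, hb] at this
        exact this.1.symm
      subst hab
      have e1 : (δ ++ [a]).erase a = δ := by
        rw [List.erase_append_right _ hb]
        simp
      have e2 : δ.erase a = δ := List.erase_of_not_mem hb
      constructor
      · simp only [Fc, e1, e2, tw_append_self hb, tw_of_not_mem hb]
      · simp only [Lo, e1, e2]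

/-- monotonicity in the second list -/
lemma Fc_snoc_mono : ∀ (γ : List (Fin d)) (δ y), Fc γ δ ≤ Fc γ (δ ++ [y])
  | [], _, _ => le_refl 0
  | a :: γ, δ, y => by
    by_cases ha : a ∈ δ
    · show (δ.takeWhile fun b => b ≠ a).length + Fc γ (δ.erase a) ≤
        ((δ ++ [y]).takeWhile fun b => b ≠ a).length + Fc γ ((δ ++ [y]).erase a)
      rw [tw_append_of_mem ha, List.erase_append_left [y] ha]
      exact Nat.add_le_add_left (Fc_snoc_mono γ (δ.erase a) y) _
    · by_cases hy : y = a
      · subst hy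
        show (δ.takeWhile fun b => b ≠ y).length + Fc γ (δ.erase y) ≤
          ((δ ++ [y]).takeWhile fun b => b ≠ y).length + Fc γ ((δ ++ [y]).erase y)
        rw [tw_append_self ha, tw_of_not_mem ha, List.erase_of_not_mem ha,
          List.erase_append_right _ ha]
        simp only [List.erase_cons_head, List.append_nil]
        refine Nat.add_le_add_left ?_ _
        have h1 := Fc_append γ δ y
        omega
      · show (δ.takeWhile fun b => b ≠ a).length + Fc γ (δ.erase a) ≤
          ((δ ++ [y]).takeWhile fun b => b ≠ a).length + Fc γ ((δ ++ [y]).erase a)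
        have hay : a ∉ δ ++ [y] := by
          intro hm
          rcases List.mem_append.1 hm with h | h
          · exact ha h
          · simp at h; exact hy h.symm
        rw [tw_of_not_mem ha, tw_of_not_mem hay, List.erase_of_not_mem ha,
          List.erase_of_not_mem hay]
        have := Fc_snoc_mono γ δ y
        simp only [List.length_append, List.length_cons, List.length_nil]
        omega

/-- ML3 : y differs from the first unfound head -/
lemma Fc_snoc_of_uf_head_ne : ∀ (γ : List (Fin d)) (δ a U y), Uf γ δ = a :: U → y ≠ a →
    Fc γ δ + 1 ≤ Fc γ (δ ++ [y])
  | [], δ, a, U, y, h, _ => by simp [Uf] at h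
  | b :: γ, δ, a, U, y, h, hy => by
    by_cases hb : b ∈ δ
    · have h' : Uf γ (δ.erase b) = a :: U := by simpa [Uf, hb] using h
      show (δ.takeWhile fun c => c ≠ b).length + Fc γ (δ.erase b) + 1 ≤
        ((δ ++ [y]).takeWhile fun c => c ≠ b).length + Fc γ ((δ ++ [y]).erase b)
      rw [tw_append_of_mem hb, List.erase_append_left [y] hb]
      have := Fc_snoc_of_uf_head_ne γ (δ.erase b) a U y h' hy
      omega
    · have hab : a = b := by
        have := h; simp [Uf, hb] at this; exact this.1.symm
      subst hab
      have hay : a ∉ δ ++ [y] := by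
        intro hm
        rcases List.mem_append.1 hm with hmem | hmem
        · exact hb hmem
        · simp at hmem; exact hy hmem.symm
      show (δ.takeWhile fun c => c ≠ a).length + Fc γ (δ.erase a) + 1 ≤
        ((δ ++ [y]).takeWhile fun c => c ≠ a).length + Fc γ ((δ ++ [y]).erase a)
      rw [tw_of_not_mem hb, tw_of_not_mem hay, List.erase_of_not_mem hb,
        List.erase_of_not_mem hay]
      have := Fc_snoc_mono γ δ y
      simp only [List.length_append, List.length_cons, List.length_nil]
      omega

/-- length bookkeeping -/
lemma Lo_length : ∀ (γ δ : List (Fin d)),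
    (Lo γ δ).length + γ.length = δ.length + (Uf γ δ).length
  | [], δ => by simp [Lo, Uf]
  | a :: γ, δ => by
    by_cases ha : a ∈ δ
    · have := Lo_length γ (δ.erase a)
      have hlen : (δ.erase a).length + 1 = δ.length := by
        rw [List.length_erase_of_mem ha]
        have : 0 < δ.length := List.length_pos_iff.2 (List.ne_nil_of_mem ha)
        omega
      simp only [Lo, Uf, ha, if_pos, List.nil_append, List.length_cons]
      omega
    · have := Lo_length γ (δ.erase a)
      rw [List.erase_of_not_mem ha] at this
      simp only [Lo, Uf, ha, if_neg, List.erase_of_not_mem ha, List.length_cons,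
        List.singleton_append, not_false_iff]
      omega

lemma Uf_nil_subperm : ∀ (γ δ : List (Fin d)), Uf γ δ = [] → γ.Subperm δ
  | [], δ, _ => List.nil_subperm
  | a :: γ, δ, h => by
    have ha : a ∈ δ := by
      by_contra hm
      simp [Uf, hm] at h
    have h' : Uf γ (δ.erase a) = [] := by simpa [Uf, ha] using h
    have ih := Uf_nil_subperm γ (δ.erase a) h'
    have h1 : (a :: γ).Subperm (a :: δ.erase a) := (List.subperm_cons a).2 ih
    exact h1.trans (List.perm_cons_erase ha).symm.subperm

section Bound
variable {q : Fin d → Fin d → ℂ} {c : ℝ}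

lemma abs_prod_le (hc0 : 0 ≤ c) (hq : ∀ i j : Fin d, i ≠ j → ‖q i j‖ ≤ c)
    (a : Fin d) : ∀ (l : List (Fin d)), (∀ b ∈ l, b ≠ a) →
    ‖(l.map (q a)).prod‖ ≤ c ^ l.length
  | [], _ => by simp
  | b :: l, h => by
    have hb : b ≠ a := h b ((List.mem_cons_self (a := b) (l := l)))
    have ih := abs_prod_le hc0 hq a l (fun x hx => h x (List.mem_cons_of_mem _ hx))
    calc ‖((b :: l).map (q a)).prod‖
        = ‖q a b‖ * ‖(l.map (q a)).prod‖ := by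
          simp [map_mul]
      _ ≤ c * c ^ l.length := by
          refine mul_le_mul (hq a b (Ne.symm hb)) ih (norm_nonneg _) hc0
      _ = c ^ (b :: l).length := by rw [List.length_cons, pow_succ']

lemma qOne_abs_le (hc0 : 0 ≤ c) (hq : ∀ i j : Fin d, i ≠ j → ‖q i j‖ ≤ c)
    (a : Fin d) (δ : List (Fin d)) :
    ‖qOne q a δ‖ ≤ c ^ (δ.takeWhile fun b => b ≠ a).length := by
  refine abs_prod_le hc0 hq a _ (fun b hb => ?_)
  have := List.mem_takeWhile_imp hb
  simpa using this

lemma qMul_abs_le (hc0 : 0 ≤ c) (hq : ∀ i j : Fin d, i ≠ j → ‖q i j‖ ≤ c) :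
    ∀ (γ δ : List (Fin d)), ‖qMul q γ δ‖ ≤ c ^ Fc γ δ
  | [], δ => by simp [qMul, Fc]
  | a :: γ, δ => by
    have ih := qMul_abs_le hc0 hq γ (δ.erase a)
    calc ‖qMul q (a :: γ) δ‖
        = ‖qOne q a δ‖ * ‖qMul q γ (δ.erase a)‖ := by
          simp [qMul, map_mul]
      _ ≤ c ^ (δ.takeWhile fun b => b ≠ a).length * c ^ Fc γ (δ.erase a) := by
          refine mul_le_mul (qOne_abs_le hc0 hq a δ) ih (norm_nonneg _)
            (pow_nonneg hc0 _)
      _ = c ^ Fc (a :: γ) δ := by rw [Fc, pow_add]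

end Bound

/-- constancy when the lists are permutations and the same letter is appended -/
lemma qMul_snoc_perm (q : Fin d → Fin d → ℂ) :
    ∀ (γ δ : List (Fin d)) (x : Fin d), γ.Perm δ →
    qMul q (γ ++ [x]) (δ ++ [x]) = qMul q γ δ
  | [], δ, x, h => by
    have : δ = [] := h.symm.eq_nil
    subst this
    simp [qMul, qOne, tw_cons_eq]
  | a :: γ, δ, x, h => by
    have ha : a ∈ δ := h.subset ((List.mem_cons_self (a := a) (l := γ)))
    have hperm : γ.Perm (δ.erase a) := by
      have := h.erase a
      simpa using this
    show qOne q a (δ ++ [x]) * qMul q (γ ++ [x]) ((δ ++ [x]).erase a) = _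
    rw [List.erase_append_left [x] ha, qMul_snoc_perm q γ (δ.erase a) x hperm]
    show _ = qOne q a δ * qMul q γ (δ.erase a)
    congr 1
    unfold qOne
    rw [tw_append_of_mem ha]

lemma prefixList_succ (α : ℕ → Fin d) (m : ℕ) :
    prefixList α (m + 1) = prefixList α m ++ [α m] := by
  unfold prefixList
  rw [List.ofFn_succ']
  simp [List.concat_eq_append]

lemma prefixList_length (α : ℕ → Fin d) (m : ℕ) : (prefixList α m).length = m := by
  simp [prefixList]

lemma shift_iterate (α : ℕ → Fin d) : ∀ (m n : ℕ), shift^[m] α n = α (n + m)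
  | 0, n => rfl
  | m + 1, n => by
    rw [Function.iterate_succ_apply]
    have := shift_iterate (shift α) m n
    rw [this]
    rfl

lemma Lo_prefix_nil {α β : ℕ → Fin d} {m : ℕ}
    (hU : Uf (prefixList α m) (prefixList β m) = []) :
    Lo (prefixList α m) (prefixList β m) = [] := by
  have := Lo_length (prefixList α m) (prefixList β m)
  rw [hU, prefixList_length, prefixList_length] at this
  simp only [List.length_nil, add_zero] at this
  exact List.length_eq_zero_iff.1 (by omega)

lemma grow_of_uf_nil {α β : ℕ → Fin d} {m : ℕ}
    (hP : ¬(shift^[m] α = shift^[m] β ∧ (prefixList β m).Perm (prefixList α m)))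
    (hU : Uf (prefixList α m) (prefixList β m) = []) :
    ∃ n, Fc (prefixList α m) (prefixList β m) < Fc (prefixList α n) (prefixList β n) := by
  have hsub : (prefixList α m).Subperm (prefixList β m) := Uf_nil_subperm _ _ hU
  have hperm : (prefixList β m).Perm (prefixList α m) :=
    (hsub.perm_of_length_le (by rw [prefixList_length, prefixList_length])).symm
  have hne : shift^[m] α ≠ shift^[m] β := fun he => hP ⟨he, hperm⟩
  have hex : ∃ j, α (j + m) ≠ β (j + m) := by
    by_contra hc
    push_neg at hc
    exact hne (funext fun k => by rw [shift_iterate, shift_iterate, hc k])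
  classical
  let N := Nat.find hex
  have hN : α (N + m) ≠ β (N + m) := Nat.find_spec hex
  have hmin : ∀ j, j < N → α (j + m) = β (j + m) := fun j hj => by
    by_contra hc
    exact Nat.find_min hex hj hc
  have inv : ∀ j, j ≤ N → Uf (prefixList α (m + j)) (prefixList β (m + j)) = [] ∧
      Fc (prefixList α (m + j)) (prefixList β (m + j))
        = Fc (prefixList α m) (prefixList β m) := by
    intro j hj
    induction j with
    | zero => exact ⟨hU, rfl⟩
    | succ j ih =>
      obtain ⟨ihU, ihF⟩ := ih (le_of_lt hj)
      have hxy : α (m + j) = β (m + j) := by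
        have := hmin j (by omega)
        rwa [Nat.add_comm j m] at this
      have hLo : Lo (prefixList α (m + j)) (prefixList β (m + j)) = [] := Lo_prefix_nil ihU
      obtain ⟨hF1, hL1⟩ :=
        Fc_snoc_of_uf_nil (prefixList α (m + j)) (prefixList β (m + j)) (β (m + j)) ihU
      rw [hLo] at hL1
      have hFs : Fc (prefixList α (m + j + 1)) (prefixList β (m + j + 1))
          = Fc (prefixList α (m + j)) (prefixList β (m + j)) := by
        rw [prefixList_succ, prefixList_succ, Fc_append, hF1, hL1, hxy]
        simp [tw_cons_eq]
      have hLs : Lo (prefixList α (m + j + 1)) (prefixList β (m + j + 1)) = [] := by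
        rw [prefixList_succ, prefixList_succ, Lo_append, hL1, hxy]
        simp
      have hUs : Uf (prefixList α (m + j + 1)) (prefixList β (m + j + 1)) = [] := by
        have := Lo_length (prefixList α (m + j + 1)) (prefixList β (m + j + 1))
        rw [hLs, prefixList_length, prefixList_length] at this
        simp only [List.length_nil, zero_add] at this
        exact List.length_eq_zero_iff.1 (by omega)
      have : m + (j + 1) = m + j + 1 := by omega
      rw [this]
      exact ⟨hUs, by rw [hFs, ihF]⟩
  obtain ⟨hUN, hFN⟩ := inv N le_rfl
  refine ⟨m + N + 1, ?_⟩
  have hLo : Lo (prefixList α (m + N)) (prefixList β (m + N)) = [] := Lo_prefix_nil hUN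
  obtain ⟨hF1, hL1⟩ :=
    Fc_snoc_of_uf_nil (prefixList α (m + N)) (prefixList β (m + N)) (β (m + N)) hUN
  rw [hLo] at hL1
  have hxy : α (m + N) ≠ β (m + N) := by rwa [Nat.add_comm m N]
  have : Fc (prefixList α (m + N + 1)) (prefixList β (m + N + 1))
      = Fc (prefixList α (m + N)) (prefixList β (m + N)) + 1 := by
    rw [prefixList_succ, prefixList_succ, Fc_append, hF1, hL1, List.nil_append,
      tw_cons_ne hxy.symm]
    simp
  omega

lemma key_growth {α β : ℕ → Fin d}
    (hP : ∀ m, ¬(shift^[m] α = shift^[m] β ∧ (prefixList β m).Perm (prefixList α m))) :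
    ∀ k m, (Uf (prefixList α m) (prefixList β m)).length ≤ k →
    ∃ n, Fc (prefixList α m) (prefixList β m) < Fc (prefixList α n) (prefixList β n) := by
  intro k
  induction k with
  | zero =>
    intro m hm
    exact grow_of_uf_nil (hP m)
      (List.length_eq_zero_iff.1 (Nat.le_zero.1 hm))
  | succ k ih =>
    intro m hm
    cases hU : Uf (prefixList α m) (prefixList β m) with
    | nil => exact grow_of_uf_nil (hP m) hU
    | cons a U' =>
      by_cases hy : β m = a
      · -- y is the first unfound head
        obtain ⟨hF1, hL1⟩ := Fc_snoc_of_uf_head (prefixList α m) (prefixList β m) a U' hU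
        have hFs : Fc (prefixList α (m + 1)) (prefixList β (m + 1))
            = Fc (prefixList α m) (prefixList β m)
              + ((Lo (prefixList α m) (prefixList β m)).takeWhile
                  fun b => b ≠ α m).length := by
          rw [prefixList_succ, prefixList_succ, hy, Fc_append, hF1, hL1]
        have hLlen : (Lo (prefixList α m) (prefixList β m)).length
            = (Uf (prefixList α m) (prefixList β m)).length := by
          have := Lo_length (prefixList α m) (prefixList β m)
          rw [prefixList_length, prefixList_length] at this
          omega
        cases hLo : Lo (prefixList α m) (prefixList β m) with
        | nil => rw [hLo, hU] at hLlen; simp at hLlen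
        | cons b rest =>
          by_cases hb : b = α m
          · subst hb
            have hFeq : Fc (prefixList α (m + 1)) (prefixList β (m + 1))
                = Fc (prefixList α m) (prefixList β m) := by
              rw [hFs, hLo, tw_cons_eq]
              simp
            have hLs : Lo (prefixList α (m + 1)) (prefixList β (m + 1)) = rest := by
              rw [prefixList_succ, prefixList_succ, hy, Lo_append, hL1, hLo,
                List.erase_cons_head]
            have hUlen : (Uf (prefixList α (m + 1)) (prefixList β (m + 1))).length ≤ k := by
              have h2 := Lo_length (prefixList α (m + 1)) (prefixList β (m + 1))
              rw [prefixList_length, prefixList_length, hLs] at h2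
              have h3 : (α m :: rest).length = (a :: U').length := by
                rw [← hLo, ← hU, hLlen]
              simp only [List.length_cons] at h3
              have h4 : U'.length ≤ k := by
                have := hm; rw [hU] at this; simp only [List.length_cons] at this; omega
              omega
            obtain ⟨n, hn⟩ := ih (m + 1) hUlen
            exact ⟨n, by omega⟩
          · refine ⟨m + 1, ?_⟩
            rw [hFs, hLo, tw_cons_ne (fun e => hb e)]
            simp only [List.length_cons]
            omega
      · -- y differs from the first unfound head : strict growth
        refine ⟨m + 1, ?_⟩
        have h1 := Fc_snoc_of_uf_head_ne (prefixList α m) (prefixList β m) a U' (β m) hU hy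
        have h2 : Fc (prefixList α m) (prefixList β m ++ [β m])
            ≤ Fc (prefixList α (m + 1)) (prefixList β (m + 1)) := by
          rw [prefixList_succ, prefixList_succ, Fc_append]
          omega
        omega

theorem statement4 {d : ℕ} (hd : 2 ≤ d) (q : Fin d → Fin d → ℂ)
    (hsym : ∀ i j : Fin d, i ≠ j → q i j = (starRingEnd ℂ) (q j i))
    (hlt : ∀ i j : Fin d, i ≠ j → ‖q i j‖ < 1)
    (α β : ℕ → Fin d) :
    ∃ L : ℂ,
      Filter.Tendsto (fun m => qMul q (prefixList α m) (prefixList β m))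
        Filter.atTop (nhds L) ∧
      (L ≠ 0 → ∃ m : ℕ, shift^[m] α = shift^[m] β ∧
        (prefixList β m).Perm (prefixList α m) ∧
        ∀ n : ℕ, m ≤ n → qMul q (prefixList α n) (prefixList β n)
          = qMul q (prefixList α m) (prefixList β m)) := by
  classical
  by_cases hP : ∃ m, shift^[m] α = shift^[m] β ∧ (prefixList β m).Perm (prefixList α m)
  · obtain ⟨m, htail, hperm⟩ := hP
    have heq : ∀ n, m ≤ n → α n = β n := by
      intro n hn
      have h1 := shift_iterate α m (n - m)
      have h2 := shift_iterate β m (n - m)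
      rw [htail] at h1
      have : n - m + m = n := by omega
      rw [this] at h1 h2
      rw [← h1, ← h2]
    have main : ∀ n, m ≤ n → (prefixList β n).Perm (prefixList α n) ∧
        qMul q (prefixList α n) (prefixList β n)
          = qMul q (prefixList α m) (prefixList β m) := by
      intro n hn
      induction n, hn using Nat.le_induction with
      | base => exact ⟨hperm, rfl⟩
      | succ n hn ih =>
        obtain ⟨ihp, ihe⟩ := ih
        have hx : α n = β n := heq n hn
        refine ⟨?_, ?_⟩
        · rw [prefixList_succ, prefixList_succ, ← hx]
          exact ihp.append_right [α n]
        · rw [prefixList_succ, prefixList_succ, ← hx,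
            qMul_snoc_perm q _ _ _ ihp.symm, ihe]
    exact ⟨qMul q (prefixList α m) (prefixList β m),
      tendsto_atTop_of_eventually_const (fun n hn => (main n hn).2),
      fun _ => ⟨m, htail, hperm, fun n hn => (main n hn).2⟩⟩
  · push_neg at hP
    have hP' : ∀ m, ¬(shift^[m] α = shift^[m] β ∧
        (prefixList β m).Perm (prefixList α m)) := by
      intro m hc
      exact hP m hc.1 hc.2
    -- the constant bounding the |q i j|
    set s : Finset ℝ := (Finset.univ : Finset (Fin d × Fin d)).image
      (fun p => if p.1 = p.2 then 0 else ‖q p.1 p.2‖) with hs_def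
    have hsne : s.Nonempty := by
      refine Finset.Nonempty.image ?_ _
      exact ⟨(⟨0, by omega⟩, ⟨0, by omega⟩), Finset.mem_univ _⟩
    set c : ℝ := s.max' hsne with hc_def
    have hc0 : 0 ≤ c := by
      refine Finset.le_max' s 0 ?_
      rw [hs_def]
      refine Finset.mem_image.2 ⟨(⟨0, by omega⟩, ⟨0, by omega⟩), Finset.mem_univ _, ?_⟩
      simp
    have hc1 : c < 1 := by
      rw [hc_def]
      refine (Finset.max'_lt_iff s hsne).2 ?_
      intro x hx
      rw [hs_def] at hx
      obtain ⟨p, _, hp⟩ := Finset.mem_image.1 hx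
      by_cases he : p.1 = p.2
      · rw [if_pos he] at hp; rw [← hp]; norm_num
      · rw [if_neg he] at hp; rw [← hp]; exact hlt p.1 p.2 he
    have hq : ∀ i j : Fin d, i ≠ j → ‖q i j‖ ≤ c := by
      intro i j hij
      refine Finset.le_max' s _ ?_
      rw [hs_def]
      exact Finset.mem_image.2 ⟨(i, j), Finset.mem_univ _, by rw [if_neg hij]⟩
    -- F is monotone and unbounded
    have hmono : Monotone (fun m => Fc (prefixList α m) (prefixList β m)) := by
      refine monotone_nat_of_le_succ (fun n => ?_)
      have h1 := Fc_snoc_mono (prefixList α n) (prefixList β n) (β n)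
      have h2 := Fc_append (prefixList α n) (prefixList β n ++ [β n]) (α n)
      simp only [prefixList_succ]
      omega
    have hub : ∀ b : ℕ, ∃ n, b ≤ Fc (prefixList α n) (prefixList β n) := by
      intro b
      induction b with
      | zero => exact ⟨0, Nat.zero_le _⟩
      | succ b ih =>
        obtain ⟨n, hn⟩ := ih
        obtain ⟨n', hn'⟩ := key_growth hP' (Uf (prefixList α n) (prefixList β n)).length
          n le_rfl
        exact ⟨n', by omega⟩
    have hFtendsto : Filter.Tendsto (fun m => Fc (prefixList α m) (prefixList β m))
        Filter.atTop Filter.atTop :=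
      Filter.tendsto_atTop_atTop_of_monotone hmono hub
    refine ⟨0, ?_, fun h0 => absurd rfl h0⟩
    have hbound : ∀ m, ‖qMul q (prefixList α m) (prefixList β m)‖
        ≤ c ^ Fc (prefixList α m) (prefixList β m) := by
      intro m
      exact qMul_abs_le hc0 hq _ _
    refine squeeze_zero_norm hbound ?_
    exact (tendsto_pow_atTop_nhds_zero_of_lt_one hc0 hc1).comp hFtendsto

end QCstar
end

section
/- For every k ≥ 0 and every a ∈ {1,…,d}, the linear map J_k : F_k → F_{k+1} determined by J_k e_γ = e_{(γ_1,…,γ_k,a)} preserves the Fock form: ⟨J_k x, J_k y⟩_F = ⟨x, y⟩_F for all x, y ∈ F_k. -/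
open scoped BigOperators InnerProductSpace

namespace QCstar

variable {d : ℕ}

lemma takeWhile_append_of_mem {α : Type*} (p : α → Bool) (l t : List α)
    (h : ∃ x ∈ l, ¬ p x) : (l ++ t).takeWhile p = l.takeWhile p := by
  induction l with
  | nil => simp at h
  | cons b l ih =>
    by_cases hb : p b
    · simp only [List.cons_append, List.takeWhile_cons, hb]
      rcases h with ⟨x, hx, hpx⟩
      rcases List.mem_cons.mp hx with h1 | h2
      · exact absurd hb (by simpa [h1] using hpx)
      · rw [ih ⟨x, h2, hpx⟩]
    · simp [List.takeWhile_cons, hb]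

lemma qOne_append {d : ℕ} (q : Fin d → Fin d → ℂ) (b : Fin d) (α t : List (Fin d))
    (hb : b ∈ α) : qOne q b (α ++ t) = qOne q b α := by
  unfold qOne
  rw [takeWhile_append_of_mem _ _ _ ⟨b, hb, by simp⟩]

lemma qMul_append {d : ℕ} (q : Fin d → Fin d → ℂ) (a : Fin d) :
    ∀ β α : List (Fin d), β.Perm α →
      qMul q (β ++ [a]) (α ++ [a]) = qMul q β α := by
  intro β
  induction β with
  | nil =>
    intro α h
    rw [(h.nil_eq).symm] -- wrong direction maybe
    simp [qMul, qOne, List.takeWhile]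
  | cons b β ih =>
    intro α h
    have hb : b ∈ α := h.mem_iff.mp List.mem_cons_self
    have h2 : β.Perm (α.erase b) := by
      have := h.erase b
      simpa using this
    simp only [List.cons_append, qMul]
    rw [List.erase_append_left _ hb, qOne_append q b α [a] hb]
    congr 1
    exact ih _ h2

lemma fockEntry_append {d : ℕ} (q : Fin d → Fin d → ℂ) (a : Fin d) (α β : List (Fin d)) :
    fockEntry q (α ++ [a]) (β ++ [a]) = fockEntry q α β := by
  unfold fockEntry
  by_cases h : β.Perm α
  · rw [if_pos ((List.perm_append_right_iff _).mpr h), if_pos h, qMul_append q a β α h]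
  · rw [if_neg (fun hc => h ((List.perm_append_right_iff _).mp hc)), if_neg h]

theorem statement5 {d : ℕ} (hd : 2 ≤ d) (q : Fin d → Fin d → ℂ)
    (hsym : ∀ i j : Fin d, i ≠ j → q i j = (starRingEnd ℂ) (q j i))
    (hlt : ∀ i j : Fin d, i ≠ j → ‖q i j‖ < 1)
    (k : ℕ) (a : Fin d) (x y : List (Fin d) →₀ ℂ)
    (hx : ∀ γ ∈ x.support, γ.length = k) (hy : ∀ γ ∈ y.support, γ.length = k) :
    fockForm q (Finsupp.mapDomain (fun γ => γ ++ [a]) x)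
        (Finsupp.mapDomain (fun γ => γ ++ [a]) y)
      = fockForm q x y := by
  have hf : Function.Injective (fun γ : List (Fin d) => γ ++ [a]) := by
    intro u v huv
    simpa using List.append_inj_left' huv rfl
  unfold fockForm
  rw [Finsupp.mapDomain_support_of_injective hf, Finsupp.mapDomain_support_of_injective hf]
  rw [Finset.sum_image (fun u _ v _ h => hf h)]
  refine Finset.sum_congr rfl fun α hα => ?_
  rw [Finset.sum_image (fun u _ v _ h => hf h)]
  refine Finset.sum_congr rfl fun β hβ => ?_
  rw [Finsupp.mapDomain_apply hf, Finsupp.mapDomain_apply hf, fockEntry_append]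


end QCstar
end

section
/- Fix α ∈ Λ. If Ω ∈ H_α satisfies S_j* Ω = 0 for all j = 1,…,d, then Ω = 0. In particular, the representation π_α admits no vacuum vector and hence is not unitarily equivalent to the Fock representation. -/
open scoped BigOperators InnerProductSpace

namespace QCstar

variable {d : ℕ}

variable {H : Type*} [NormedAddCommGroup H] [InnerProductSpace ℂ H] [CompleteSpace H]

/-- `(H, e)` is a realization of the Hilbert space `H_α`: the vectors `e β`, `β ∼ α`,
have the prescribed inner products and their span is dense. -/
def IsRepSpace (q : Fin d → Fin d → ℂ) (α : ℕ → Fin d) (e : (ℕ → Fin d) → H) : Prop :=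
  (∀ β γ : ℕ → Fin d, equivTail β α → equivTail γ α → ⟪e β, e γ⟫_ℂ = qInf q γ β) ∧
  (Submodule.span ℂ (e '' {β | equivTail β α})).topologicalClosure = ⊤

/-- The operators `S j` act on the basis vectors of `H_α` as prescribed:
`S j e_β = e_{(j,β)}`, and the adjoint kills `e_β` if `j` does not occur in `β` and
sends `e_β` to `q(j,β) e_{β∖j}` otherwise. -/
def IsRepOps (q : Fin d → Fin d → ℂ) (α : ℕ → Fin d) (e : (ℕ → Fin d) → H)
    (S : Fin d → H →L[ℂ] H) : Prop :=
  (∀ (j : Fin d) (β : ℕ → Fin d), equivTail β α → S j (e β) = e (consSeq j β)) ∧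
  (∀ (j : Fin d) (β : ℕ → Fin d), equivTail β α → (¬∃ n, β n = j) →
    ContinuousLinearMap.adjoint (S j) (e β) = 0) ∧
  (∀ (j : Fin d) (β : ℕ → Fin d), equivTail β α → (∃ n, β n = j) →
    ContinuousLinearMap.adjoint (S j) (e β) = qOneInf q j β • e (eraseInf j β))

theorem statement11 {d : ℕ} (hd : 2 ≤ d) (q : Fin d → Fin d → ℂ)
    (hsym : ∀ i j : Fin d, i ≠ j → q i j = (starRingEnd ℂ) (q j i))
    (hlt : ∀ i j : Fin d, i ≠ j → ‖q i j‖ < 1)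
    (α : ℕ → Fin d) (e : (ℕ → Fin d) → H) (S : Fin d → H →L[ℂ] H)
    (he : IsRepSpace q α e) (hS : IsRepOps q α e S) :
    (∀ Ω : H, (∀ j : Fin d, ContinuousLinearMap.adjoint (S j) Ω = 0) → Ω = 0) ∧
    (∀ (K : Type) (_ : NormedAddCommGroup K), ∀ (_ : InnerProductSpace ℂ K)
      (_ : CompleteSpace K), ∀ (S' : Fin d → K →L[ℂ] K) (Ω' : K), Ω' ≠ 0 →
      (∀ j : Fin d, ContinuousLinearMap.adjoint (S' j) Ω' = 0) →
      ¬∃ U : H ≃ₗᵢ[ℂ] K, ∀ (j : Fin d) (x : H), U (S j x) = S' j (U x)) := by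

  constructor
  · intro Ω hΩ
    have key : ∀ β : ℕ → Fin d, equivTail β α → ⟪e β, Ω⟫_ℂ = 0 := by
      intro β hβ
      have hshift : equivTail (shift β) α := by
        obtain ⟨m, n, h⟩ := hβ
        exact ⟨m, n + 1, by
          rw [← Function.iterate_succ_apply, Function.iterate_succ_apply',
            Function.iterate_succ_apply', h]⟩
      have hcons : consSeq (β 0) (shift β) = β := by
        funext k; cases k <;> rfl
      have heq : e β = S (β 0) (e (shift β)) := by
        rw [hS.1 (β 0) (shift β) hshift, hcons]
      rw [heq, ← ContinuousLinearMap.adjoint_inner_right, hΩ (β 0), inner_zero_right]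
    have hmem : Ω ∈ (Submodule.span ℂ (e '' {β | equivTail β α}))ᗮ := by
      rw [Submodule.mem_orthogonal]
      intro u hu
      induction hu using Submodule.span_induction with
      | mem x hx =>
        obtain ⟨β, hβ, rfl⟩ := hx
        exact key β hβ
      | zero => simp
      | add x y _ _ hx hy => rw [inner_add_left, hx, hy, add_zero]
      | smul c x _ hx => rw [inner_smul_left, hx, mul_zero]
    have hbot : (Submodule.span ℂ (e '' {β | equivTail β α}))ᗮ = ⊥ := by
      rw [← Submodule.topologicalClosure_eq_top_iff]
      exact he.2
    rw [hbot] at hmem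
    exact hmem
  · intro K _ _ _ S' Ω' hΩ' hvac ⟨U, hU⟩
    have h1 : ∀ Ω : H, (∀ j : Fin d, ContinuousLinearMap.adjoint (S j) Ω = 0) → Ω = 0 := by
      intro Ω hΩ
      have key : ∀ β : ℕ → Fin d, equivTail β α → ⟪e β, Ω⟫_ℂ = 0 := by
        intro β hβ
        have hshift : equivTail (shift β) α := by
          obtain ⟨m, n, h⟩ := hβ
          exact ⟨m, n + 1, by
            rw [← Function.iterate_succ_apply, Function.iterate_succ_apply',
              Function.iterate_succ_apply', h]⟩
        have hcons : consSeq (β 0) (shift β) = β := by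
          funext k; cases k <;> rfl
        have heq : e β = S (β 0) (e (shift β)) := by
          rw [hS.1 (β 0) (shift β) hshift, hcons]
        rw [heq, ← ContinuousLinearMap.adjoint_inner_right, hΩ (β 0), inner_zero_right]
      have hmem : Ω ∈ (Submodule.span ℂ (e '' {β | equivTail β α}))ᗮ := by
        rw [Submodule.mem_orthogonal]
        intro u hu
        induction hu using Submodule.span_induction with
        | mem x hx =>
          obtain ⟨β, hβ, rfl⟩ := hx
          exact key β hβ
        | zero => simp
        | add x y _ _ hx hy => rw [inner_add_left, hx, hy, add_zero]
        | smul c x _ hx => rw [inner_smul_left, hx, mul_zero]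
      have hbot : (Submodule.span ℂ (e '' {β | equivTail β α}))ᗮ = ⊥ := by
        rw [← Submodule.topologicalClosure_eq_top_iff]
        exact he.2
      rw [hbot] at hmem
      exact hmem
    set Ω : H := U.symm Ω' with hΩdef
    have hadj : ∀ j : Fin d, ContinuousLinearMap.adjoint (S j) Ω = 0 := by
      intro j
      rw [← inner_self_eq_zero (𝕜 := ℂ)]
      rw [ContinuousLinearMap.adjoint_inner_left, ← U.inner_map_map, hU j,
        hΩdef, U.apply_symm_apply, ← ContinuousLinearMap.adjoint_inner_left, hvac j,
        inner_zero_left]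
    have : Ω = 0 := h1 Ω hadj
    apply hΩ'
    have := congrArg U this
    rwa [U.apply_symm_apply, map_zero] at this


end QCstar
end
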